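/- Let g : (0,1) → ℝ be concave and nondecreasing, and assume that (g(b) + 1/2 + (b/2)·log b)/(b·log b) → 0 as b → 0⁺. Then for every ε > 0 there exists b₀ ∈ (0,1) such that for all b ∈ (0,b₀), every supporting slope m of g at b satisfies m ≥ (1/2 − ε)·|log b|. In particular, liminf_{b→0⁺} g'(b)/|log b| ≥ 1/2 at points of differentiability. -/
import Mathlib


open Filter Set

set_option maxHeartbeats 1000000

/-- `m` is a supporting slope of `g` at `b` if `g(c) ≤ g(b) + m·(c - b)` for all
`c ∈ (0,1)`. -/
def IsSupportingSlope (g : ℝ → ℝ) (b m : ℝ) : Prop :=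
  ∀ c ∈ Set.Ioo (0 : ℝ) 1, g c ≤ g b + m * (c - b)

/-- Let `g : (0,1) → ℝ` be concave and nondecreasing with
`(g(b) + 1/2 + (b/2) log b)/(b log b) → 0` as `b → 0⁺`. Then for every `ε > 0`
there is `b₀ ∈ (0,1)` such that for every `b ∈ (0,b₀)` every supporting slope `m`
of `g` at `b` satisfies `m ≥ (1/2 - ε)|log b|`. -/
theorem supporting_slope_lower_bound (g : ℝ → ℝ)
    (hconc : ConcaveOn ℝ (Set.Ioo (0 : ℝ) 1) g)
    (hmono : MonotoneOn g (Set.Ioo (0 : ℝ) 1))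
    (hasym : Tendsto (fun b => (g b + 1 / 2 + b / 2 * Real.log b) / (b * Real.log b))
      (nhdsWithin 0 (Set.Ioi 0)) (nhds 0)) :
    ∀ ε > (0 : ℝ), ∃ b₀ ∈ Set.Ioo (0 : ℝ) 1, ∀ b ∈ Set.Ioo 0 b₀, ∀ m : ℝ,
      IsSupportingSlope g b m → (1 / 2 - ε) * |Real.log b| ≤ m := by
  intro ε hε
  set δ : ℝ := ε / 6 with hδdef
  have hδ : 0 < δ := by positivity
  have hev : ∀ᶠ x in nhdsWithin 0 (Set.Ioi (0:ℝ)),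
      dist ((g x + 1 / 2 + x / 2 * Real.log x) / (x * Real.log x)) 0 < δ :=
    Metric.tendsto_nhds.mp hasym δ hδ
  obtain ⟨b₁, hb₁, hbd⟩ := (nhdsGT_basis (0:ℝ)).eventually_iff.mp hev
  -- bound on the error term
  have hbound : ∀ x, 0 < x → x < b₁ → x < 1 →
      |g x + 1 / 2 + x / 2 * Real.log x| ≤ δ * (x * (-Real.log x)) := by
    intro x hx hxb hx1
    have hlog : Real.log x < 0 := Real.log_neg hx hx1
    have hne : x * Real.log x ≠ 0 := by
      have : x * Real.log x < 0 := mul_neg_of_pos_of_neg hx hlog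
      exact ne_of_lt this
    have h1 := hbd ⟨hx, hxb⟩
    rw [Real.dist_eq, sub_zero, abs_div] at h1
    have habs : |x * Real.log x| = x * (-Real.log x) := by
      rw [abs_mul, abs_of_pos hx, abs_of_neg hlog]
    have hpos : 0 < |x * Real.log x| := abs_pos.mpr hne
    calc |g x + 1 / 2 + x / 2 * Real.log x|
        = |g x + 1 / 2 + x / 2 * Real.log x| / |x * Real.log x| * |x * Real.log x| := by
          field_simp
      _ ≤ δ * |x * Real.log x| := by
          apply mul_le_mul_of_nonneg_right (le_of_lt h1) (abs_nonneg _)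
      _ = δ * (x * (-Real.log x)) := by rw [habs]
  set b₀ : ℝ := min (min (b₁ / 2) (1 / 2)) (Real.exp (-(2 * Real.log 2 / ε))) with hb₀def
  have hb₀pos : 0 < b₀ := by
    apply lt_min (lt_min (by linarith) (by norm_num)) (Real.exp_pos _)
  have hb₀half : b₀ ≤ 1 / 2 := le_trans (min_le_left _ _) (min_le_right _ _)
  have hb₀b₁ : b₀ ≤ b₁ / 2 := le_trans (min_le_left _ _) (min_le_left _ _)
  have hb₀exp : b₀ ≤ Real.exp (-(2 * Real.log 2 / ε)) := min_le_right _ _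
  refine ⟨b₀, ⟨hb₀pos, by linarith⟩, ?_⟩
  intro b hb m hm
  obtain ⟨hbpos, hbb₀⟩ := hb
  have hb1 : b < 1 / 2 := lt_of_lt_of_le hbb₀ hb₀half
  have h2b1 : 2 * b < 1 := by linarith
  have h2bb₁ : 2 * b < b₁ := by
    have : b < b₁ / 2 := lt_of_lt_of_le hbb₀ hb₀b₁
    linarith
  have hbb₁ : b < b₁ := by linarith
  have hlogb : Real.log b < 0 := Real.log_neg hbpos (by linarith)
  set L : ℝ := -Real.log b with hLdef
  have hLpos : 0 < L := by simp [hLdef]; linarith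
  have habsL : |Real.log b| = L := abs_of_neg hlogb
  -- L is large: L > 2 log 2 / ε
  have hLlarge : 2 * Real.log 2 / ε < L := by
    have hlt : b < Real.exp (-(2 * Real.log 2 / ε)) := lt_of_lt_of_le hbb₀ hb₀exp
    have := Real.log_lt_log hbpos hlt
    rw [Real.log_exp] at this
    simp only [hLdef]
    linarith
  -- supporting slope at c = 2b
  have hslope := hm (2 * b) ⟨by linarith, h2b1⟩
  -- error bounds
  have hA := hbound (2 * b) (by linarith) h2bb₁ h2b1
  have hB := hbound b hbpos hbb₁ (by linarith)
  have hlog2b : Real.log (2 * b) = Real.log 2 + Real.log b :=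
    Real.log_mul (by norm_num) (ne_of_gt hbpos)
  have hlog2 : (0:ℝ) < Real.log 2 := Real.log_pos (by norm_num)
  have hlog2b_le : -Real.log (2 * b) ≤ L := by
    rw [hlog2b]; simp only [hLdef]; linarith
  have hlog2b_neg : Real.log (2 * b) < 0 := Real.log_neg (by linarith) h2b1
  -- from hA: |h(2b)| ≤ δ * (2b * (-log(2b))) ≤ δ * (2b * L)
  have hA' : -(δ * (2 * b * L)) ≤ g (2 * b) + 1 / 2 + (2 * b) / 2 * Real.log (2 * b) := by
    have h1 : δ * (2 * b * (-Real.log (2 * b))) ≤ δ * (2 * b * L) := by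
      apply mul_le_mul_of_nonneg_left _ (le_of_lt hδ)
      apply mul_le_mul_of_nonneg_left hlog2b_le (by linarith)
    have h2 := neg_abs_le (g (2 * b) + 1 / 2 + (2 * b) / 2 * Real.log (2 * b))
    linarith [abs_le.mp (le_trans hA h1) |>.1]
  have hB' : g b + 1 / 2 + b / 2 * Real.log b ≤ δ * (b * L) := by
    linarith [abs_le.mp hB |>.2]
  -- combine: m * b ≥ g(2b) - g(b)
  have hkey : g (2 * b) - g b ≤ m * b := by
    have : g (2 * b) ≤ g b + m * (2 * b - b) := hslope
    have heq : 2 * b - b = b := by ring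
    rw [heq] at this
    linarith
  -- g(2b) - g(b) ≥ -3δ b L - b log 2 + (b/2) L
  have hlower : -(3 * δ * (b * L)) - b * Real.log 2 + b / 2 * L ≤ g (2 * b) - g b := by
    have hexp : (2 * b) / 2 * Real.log (2 * b) = b * Real.log 2 + b * Real.log b := by
      rw [hlog2b]; ring
    have hLb : Real.log b = -L := by simp [hLdef]
    rw [hexp, hLb] at hA'
    rw [hLb] at hB'
    linarith
  have hmain : m * b ≥ -(3 * δ * (b * L)) - b * Real.log 2 + b / 2 * L := le_trans hlower hkey
  -- divide by b
  have hmb : -(3 * δ * L) - Real.log 2 + L / 2 ≤ m := by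
    nlinarith [hmain, hbpos]
  rw [habsL]
  -- (1/2 - ε) L ≤ -(ε/2) L - log 2 + L/2 given (ε/2) L > log 2
  have h3δ : 3 * δ = ε / 2 := by rw [hδdef]; ring
  have hεL : Real.log 2 < ε / 2 * L := by
    have h1 : 2 * Real.log 2 < ε * L := by
      have h2 := (div_lt_iff₀ hε).mp hLlarge
      nlinarith
    nlinarith
  rw [h3δ] at hmb
  linarith [hmb, hεL]
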